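/- Let f ∈ ω^ω and define f' ∈ ω^ω by f'(n) = 2^n · (f(n) + 1). Then for every h ∈ ℤ^ω, μ_{f'}(H(f) + h) = 0, where H(f) = {g ∈ ℤ^ω : |g(n)| ≤ f(n) for infinitely many n ∈ ω} (a Borel subset of ℤ^ω). -/

import Mathlib

open MeasureTheory Filter
open scoped ENNReal

noncomputable section

/-- A subset of `ℤ^ω` is universally measurable if it is measurable with respect to the
completion of every Borel probability measure on `ℤ^ω`. -/
def UnivMeasurable (U : Set (ℕ → ℤ)) : Prop :=
  ∀ μ : Measure (ℕ → ℤ), IsProbabilityMeasure μ → NullMeasurableSet U μ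

/-- Christensen's notion: `S ⊆ ℤ^ω` is Haar-null if there are a universally measurable
`U ⊇ S` and a Borel probability measure `μ` with `μ (U + g) = 0` for every `g ∈ ℤ^ω`. -/
def IsHaarNull (S : Set (ℕ → ℤ)) : Prop :=
  ∃ (U : Set (ℕ → ℤ)) (μ : Measure (ℕ → ℤ)),
    S ⊆ U ∧ UnivMeasurable U ∧ IsProbabilityMeasure μ ∧
    ∀ g : ℕ → ℤ, μ ((fun x => x + g) '' U) = 0

/-- Eventual domination `f ≤* g`: `f n ≤ g n` for all but finitely many `n`. -/
def EvLE (f g : ℕ → ℕ) : Prop := ∀ᶠ n in atTop, f n ≤ g n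

/-- A dominating family in Baire space. -/
def Dominating (S : Set (ℕ → ℕ)) : Prop := ∀ f : ℕ → ℕ, ∃ g ∈ S, EvLE f g

/-- `∏_{i<n} (b i + 1)`. -/
def basePow (b : ℕ → ℕ) (n : ℕ) : ℕ := ∏ i ∈ Finset.range n, (b i + 1)

/-- The digits of `x ∈ [0,1)` in the mixed-radix expansion with bases `b n + 1`;
the `n`-th digit is uniformly distributed on `{0, …, b n}`, and the digits are independent. -/
def digitMap (b : ℕ → ℕ) (x : ℝ) : ℕ → ℤ :=
  fun n => ⌊x * (basePow b (n + 1) : ℝ)⌋ - (b n + 1) * ⌊x * (basePow b n : ℝ)⌋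

/-- `μ_b`: the product probability measure on `ℤ^ω` whose `n`-th factor is the uniform
probability measure on `{0, 1, …, b n} ⊆ ℤ`, realized as the joint distribution of the
mixed-radix digits (with bases `b n + 1`) of a uniformly random point of `[0,1)`.
(Applied to an arbitrary set it gives the outer measure `μ_b^*`.) -/
def muB (b : ℕ → ℕ) : Measure (ℕ → ℤ) :=
  Measure.map (digitMap b) (volume.restrict (Set.Ico (0 : ℝ) 1))

end

lemma measurable_digitMap (b : ℕ → ℕ) : Measurable (digitMap b) := by
  apply measurable_pi_lambda
  intro n
  exact ((measurable_id.mul_const _).floor).sub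
    (((measurable_id.mul_const _).floor).const_mul _)

lemma key (b : ℕ → ℕ) (n : ℕ) (S : Finset ℤ) :
    volume ((fun x => digitMap b x n) ⁻¹' ↑S ∩ Set.Ico (0:ℝ) 1) ≤
      (S.card : ℝ≥0∞) * (basePow b n : ℝ≥0∞) *
        ENNReal.ofReal (1 / (basePow b (n+1) : ℝ)) := by
  set B := basePow b n with hB
  set B' := basePow b (n+1) with hB'
  have hBpos : 0 < B := Finset.prod_pos (fun i _ => Nat.succ_pos _)
  have hB'pos : 0 < B' := Finset.prod_pos (fun i _ => Nat.succ_pos _)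
  have hB'posR : (0:ℝ) < B' := by exact_mod_cast hB'pos
  have hsub : (fun x => digitMap b x n) ⁻¹' ↑S ∩ Set.Ico (0:ℝ) 1 ⊆
      ⋃ d ∈ S, ⋃ j ∈ Finset.range B,
        Set.Ico ((((j : ℤ) * (b n + 1) + d : ℤ) : ℝ) / B')
          ((((j : ℤ) * (b n + 1) + d + 1 : ℤ) : ℝ) / B') := by
    rintro x ⟨hxS, hx0, hx1⟩
    set d := digitMap b x n with hd
    set j := ⌊x * (B : ℝ)⌋ with hj
    have hj0 : 0 ≤ j := Int.floor_nonneg.2 (by positivity)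
    have hjB : j < B := by
      apply Int.floor_lt.2
      push_cast
      have hx : x * B < 1 * B := mul_lt_mul_of_pos_right hx1 (by exact_mod_cast hBpos)
      linarith
    have hfloor : ⌊x * (B' : ℝ)⌋ = j * (b n + 1) + d := by
      simp only [hd, digitMap, ← hj]
      ring
    have hmem : x ∈ Set.Ico ((((j : ℤ) * (b n + 1) + d : ℤ) : ℝ) / B')
        ((((j : ℤ) * (b n + 1) + d + 1 : ℤ) : ℝ) / B') := by
      have h1 : ((j * (b n + 1) + d : ℤ) : ℝ) ≤ x * B' := by
        rw [← hfloor]; exact Int.floor_le _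
      have h2 : x * B' < ((j * (b n + 1) + d + 1 : ℤ) : ℝ) := by
        rw [← hfloor]; push_cast; exact Int.lt_floor_add_one _
      constructor
      · rw [div_le_iff₀ hB'posR]; exact_mod_cast h1
      · rw [lt_div_iff₀ hB'posR]; exact_mod_cast h2
    refine Set.mem_biUnion hxS ?_
    have hjm : j.toNat ∈ Finset.range B := by
      rw [Finset.mem_range]
      exact (Int.toNat_lt' hBpos).2 hjB
    refine Set.mem_biUnion hjm ?_
    rw [Int.toNat_of_nonneg hj0]
    exact hmem
  have hvol : ∀ (d : ℤ) (j : ℕ), volume (Set.Ico ((((j : ℤ) * (b n + 1) + d : ℤ) : ℝ) / B')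
      ((((j : ℤ) * (b n + 1) + d + 1 : ℤ) : ℝ) / B')) = ENNReal.ofReal (1 / (B' : ℝ)) := by
    intro d j
    rw [Real.volume_Ico, div_sub_div_same]
    congr 1
    push_cast
    ring_nf
  refine le_trans (measure_mono hsub) ?_
  refine le_trans (measure_biUnion_finset_le _ _) ?_
  refine le_trans (Finset.sum_le_sum fun d _ => measure_biUnion_finset_le (Finset.range B) _) ?_
  apply le_of_eq
  simp only [hvol, Finset.sum_const, Finset.card_range, nsmul_eq_mul]
  ring

lemma muB_s_bound (f f' : ℕ → ℕ) (hf' : ∀ n, f' n = 2 ^ n * (f n + 1)) (h : ℕ → ℤ) (n : ℕ) :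
    muB f' {g : ℕ → ℤ | |g n - h n| ≤ (f n : ℤ)} ≤ ENNReal.ofReal (2 * (1/2 : ℝ)^n) := by
  set S : Finset ℤ := Finset.Icc (h n - f n) (h n + f n) with hS
  have hmeas : MeasurableSet {g : ℕ → ℤ | |g n - h n| ≤ (f n : ℤ)} := by
    have heq : {g : ℕ → ℤ | |g n - h n| ≤ (f n : ℤ)} =
        (fun g : ℕ → ℤ => g n) ⁻¹' {z : ℤ | |z - h n| ≤ (f n : ℤ)} := rfl
    rw [heq]
    exact measurable_pi_apply n .of_discrete
  have hpre : digitMap f' ⁻¹' {g : ℕ → ℤ | |g n - h n| ≤ (f n : ℤ)} =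
      (fun x => digitMap f' x n) ⁻¹' ↑S := by
    ext x
    simp only [Set.mem_preimage, Set.mem_setOf_eq, hS, Finset.coe_Icc, Set.mem_Icc, abs_le]
    omega
  rw [muB, Measure.map_apply (measurable_digitMap f') hmeas,
    Measure.restrict_apply (measurable_digitMap f' hmeas), hpre]
  refine le_trans (key f' n S) ?_
  have hcard : S.card = 2 * f n + 1 := by
    rw [hS, Int.card_Icc]; omega
  set B := basePow f' n with hB
  have hBpos : 0 < B := Finset.prod_pos (fun i _ => Nat.succ_pos _)
  have hB' : ((basePow f' (n+1) : ℕ) : ℝ) = (B : ℝ) * ((f' n : ℝ) + 1) := by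
    rw [hB]
    have hps : basePow f' (n+1) = basePow f' n * (f' n + 1) := Finset.prod_range_succ _ _
    rw [hps]
    push_cast
    ring
  rw [hcard, hB']
  have h1 : ((2 * f n + 1 : ℕ) : ℝ≥0∞) * (B : ℝ≥0∞) * ENNReal.ofReal (1 / ((B:ℝ) * ((f' n : ℝ) + 1)))
      = ENNReal.ofReal (((2 * f n + 1 : ℕ) : ℝ) * (B : ℝ) * (1 / ((B:ℝ) * ((f' n : ℝ) + 1)))) := by
    rw [ENNReal.ofReal_mul (by positivity), ENNReal.ofReal_mul (by positivity)]
    simp only [ENNReal.ofReal_natCast]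
  rw [h1]
  apply ENNReal.ofReal_le_ofReal
  have hBR : (0:ℝ) < B := by exact_mod_cast hBpos
  have heq : ((2 * f n + 1 : ℕ) : ℝ) * (B : ℝ) * (1 / ((B:ℝ) * ((f' n : ℝ) + 1)))
      = ((2 * f n + 1 : ℕ) : ℝ) / ((f' n : ℝ) + 1) := by
    field_simp
  rw [heq]
  rw [div_le_iff₀ (by positivity)]
  have hnat : (2 * f n + 1) * 2 ^ n ≤ 2 * (f' n + 1) := by
    rw [hf' n]
    nlinarith [Nat.one_le_two_pow (n := n)]
  have hnatR : ((2 * f n + 1 : ℕ) : ℝ) * 2 ^ n ≤ 2 * ((f' n : ℝ) + 1) := by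
    exact_mod_cast hnat
  have h2 : (2 : ℝ) * (1/2)^n * (2:ℝ)^n = 2 := by
    rw [one_div, inv_pow, mul_assoc, inv_mul_cancel₀ (by positivity)]; ring
  nlinarith [pow_pos (by norm_num : (0:ℝ) < 1/2) n, pow_pos (by norm_num : (0:ℝ) < 2) n]


/-- With `f'(n) = 2^n (f(n) + 1)`, every translate of
`H(f) = {g ∈ ℤ^ω : |g(n)| ≤ f(n) for infinitely many n}` is `μ_{f'}`-null. -/
theorem muB_translate_of_infinitely_often_bounded_eq_zero
    (f : ℕ → ℕ) (f' : ℕ → ℕ) (hf' : ∀ n, f' n = 2 ^ n * (f n + 1)) (h : ℕ → ℤ) :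
    muB f' ((fun g => g + h) '' {g : ℕ → ℤ | {n : ℕ | |g n| ≤ (f n : ℤ)}.Infinite}) = 0 := by
  set s : ℕ → Set (ℕ → ℤ) := fun n => {g : ℕ → ℤ | |g n - h n| ≤ (f n : ℤ)} with hs
  have hsub : (fun g => g + h) '' {g : ℕ → ℤ | {n : ℕ | |g n| ≤ (f n : ℤ)}.Infinite} ⊆
      limsup s atTop := by
    rintro _ ⟨g0, hg0, rfl⟩
    rw [Filter.mem_limsup_iff_frequently_mem]
    have hfreq := Nat.frequently_atTop_iff_infinite.2 hg0
    refine hfreq.mono fun n hn => ?_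
    simp only [hs, Set.mem_setOf_eq, Pi.add_apply, add_sub_cancel_right]
    exact hn
  have htsum : ∑' n, muB f' (s n) ≠ ⊤ := by
    refine ne_top_of_le_ne_top ?_ (ENNReal.tsum_le_tsum fun n => muB_s_bound f f' hf' h n)
    rw [← ENNReal.ofReal_tsum_of_nonneg (fun n => by positivity)
      ((summable_geometric_of_lt_one (by norm_num) (by norm_num)).mul_left 2)]
    exact ENNReal.ofReal_ne_top
  have h0 := measure_limsup_atTop_eq_zero htsum
  exact le_antisymm (h0 ▸ measure_mono hsub) (by positivity)
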